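/- Let K be a field and let P, Q, R be homogeneous polynomials in K[u,v] of the same degree n with no common factor. If (p₁,q₁,r₁) and (p₂,q₂,r₂) form a homogeneous basis of the (free, rank 2) graded syzygy module of P, Q, R, then deg(p₁,q₁,r₁) + deg(p₂,q₂,r₂) = n. -/

import Mathlib

open MvPolynomial

/-- The module of syzygies between three bivariate polynomials `P, Q, R`:
triples `(p, q, r)` with `p*P + q*Q + r*R = 0`, as a submodule of `(K[u,v])³`. -/
noncomputable def syzygyModule₂ {K : Type*} [Field K]
    (P Q R : MvPolynomial (Fin 2) K) :
    Submodule (MvPolynomial (Fin 2) K) (Fin 3 → MvPolynomial (Fin 2) K) :=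
  LinearMap.ker
    (P • (LinearMap.proj 0 :
        (Fin 3 → MvPolynomial (Fin 2) K) →ₗ[MvPolynomial (Fin 2) K] MvPolynomial (Fin 2) K)
      + Q • (LinearMap.proj 1 :
        (Fin 3 → MvPolynomial (Fin 2) K) →ₗ[MvPolynomial (Fin 2) K] MvPolynomial (Fin 2) K)
      + R • (LinearMap.proj 2 :
        (Fin 3 → MvPolynomial (Fin 2) K) →ₗ[MvPolynomial (Fin 2) K] MvPolynomial (Fin 2) K))

section Aux

variable {K : Type*} [Field K]

lemma SyzAux.mem_iff {P Q R : MvPolynomial (Fin 2) K} {v : Fin 3 → MvPolynomial (Fin 2) K} :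
    v ∈ syzygyModule₂ P Q R ↔ P * v 0 + Q * v 1 + R * v 2 = 0 := by
  simp [syzygyModule₂, LinearMap.mem_ker, smul_eq_mul]

/-- Engine lemma: if a combination `x • (b 0) + y • (b 1)` of the two basis syzygies has all
components divisible by a nonzero `π`, then `π` divides `x` and `y`. -/
lemma SyzAux.engine {P Q R : MvPolynomial (Fin 2) K}
    (b : Module.Basis (Fin 2) (MvPolynomial (Fin 2) K) (syzygyModule₂ P Q R))
    {π x y : MvPolynomial (Fin 2) K} (hπ : π ≠ 0)
    (hdvd : ∀ i, π ∣ (x * ((b 0 : Fin 3 → MvPolynomial (Fin 2) K) i)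
      + y * ((b 1 : Fin 3 → MvPolynomial (Fin 2) K) i))) :
    π ∣ x ∧ π ∣ y := by
  choose s hs using hdvd
  have hv := SyzAux.mem_iff.mp (b 0).2
  have hw := SyzAux.mem_iff.mp (b 1).2
  have hsZ : s ∈ syzygyModule₂ P Q R := by
    rw [SyzAux.mem_iff]
    apply mul_left_cancel₀ hπ
    rw [mul_zero]
    linear_combination (-P) * hs 0 - Q * hs 1 - R * hs 2 + x * hv + y * hw
  have key : x • b 0 + y • b 1 = π • (⟨s, hsZ⟩ : syzygyModule₂ P Q R) := by
    apply Subtype.ext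
    funext i
    simp only [Submodule.coe_add, SetLike.val_smul, Pi.add_apply, Pi.smul_apply,
      smul_eq_mul]
    exact hs i
  have hrepr := congrArg b.repr key
  rw [map_add, map_smul, map_smul, map_smul, Module.Basis.repr_self, Module.Basis.repr_self] at hrepr
  constructor
  · refine ⟨b.repr ⟨s, hsZ⟩ 0, ?_⟩
    have h0 := DFunLike.congr_fun hrepr 0
    simpa [Finsupp.single_apply] using h0
  · refine ⟨b.repr ⟨s, hsZ⟩ 1, ?_⟩
    have h1 := DFunLike.congr_fun hrepr 1
    simpa [Finsupp.single_apply] using h1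

lemma SyzAux.not_isUnit_X : ¬ IsUnit (X 0 : MvPolynomial (Fin 2) K) := by
  intro h
  have := h.map (eval (fun _ => (0 : K)))
  simp only [eval_X] at this
  exact not_isUnit_zero this

/-- Any common divisor of the three 2×2 minors of the basis matrix is a unit. -/
lemma SyzAux.minors_unit {P Q R p₁ q₁ r₁ p₂ q₂ r₂ : MvPolynomial (Fin 2) K}
    (h₁ : (![p₁, q₁, r₁] : Fin 3 → MvPolynomial (Fin 2) K) ∈ syzygyModule₂ P Q R)
    (h₂ : (![p₂, q₂, r₂] : Fin 3 → MvPolynomial (Fin 2) K) ∈ syzygyModule₂ P Q R)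
    (b : Module.Basis (Fin 2) (MvPolynomial (Fin 2) K) (syzygyModule₂ P Q R))
    (hb0 : b 0 = ⟨![p₁, q₁, r₁], h₁⟩) (hb1 : b 1 = ⟨![p₂, q₂, r₂], h₂⟩) :
    ∀ d : MvPolynomial (Fin 2) K,
      d ∣ (q₁ * r₂ - q₂ * r₁) → d ∣ (r₁ * p₂ - r₂ * p₁) → d ∣ (p₁ * q₂ - p₂ * q₁) →
      IsUnit d := by
  have cv : ((b 0 : syzygyModule₂ P Q R) : Fin 3 → MvPolynomial (Fin 2) K)
      = ![p₁, q₁, r₁] := by rw [hb0]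
  have cw : ((b 1 : syzygyModule₂ P Q R) : Fin 3 → MvPolynomial (Fin 2) K)
      = ![p₂, q₂, r₂] := by rw [hb1]
  have main : ∀ π : MvPolynomial (Fin 2) K, π ≠ 0 →
      π ∣ (q₁ * r₂ - q₂ * r₁) → π ∣ (r₁ * p₂ - r₂ * p₁) → π ∣ (p₁ * q₂ - p₂ * q₁) →
      IsUnit π := by
    intro π hπ h1 h2 h3
    have E1 : π ∣ p₂ ∧ π ∣ (-p₁) := by
      refine SyzAux.engine b hπ (x := p₂) (y := -p₁) ?_
      intro i
      rw [cv, cw]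
      fin_cases i
      · show π ∣ p₂ * p₁ + -p₁ * p₂
        rw [show p₂ * p₁ + -p₁ * p₂ = 0 by ring]
        exact dvd_zero π
      · show π ∣ p₂ * q₁ + -p₁ * q₂
        rw [show p₂ * q₁ + -p₁ * q₂ = -(p₁ * q₂ - p₂ * q₁) by ring]
        exact dvd_neg.mpr h3
      · show π ∣ p₂ * r₁ + -p₁ * r₂
        rw [show p₂ * r₁ + -p₁ * r₂ = (r₁ * p₂ - r₂ * p₁) by ring]
        exact h2
    have E2 : π ∣ q₂ ∧ π ∣ (-q₁) := by
      refine SyzAux.engine b hπ (x := q₂) (y := -q₁) ?_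
      intro i
      rw [cv, cw]
      fin_cases i
      · show π ∣ q₂ * p₁ + -q₁ * p₂
        rw [show q₂ * p₁ + -q₁ * p₂ = (p₁ * q₂ - p₂ * q₁) by ring]
        exact h3
      · show π ∣ q₂ * q₁ + -q₁ * q₂
        rw [show q₂ * q₁ + -q₁ * q₂ = 0 by ring]
        exact dvd_zero π
      · show π ∣ q₂ * r₁ + -q₁ * r₂
        rw [show q₂ * r₁ + -q₁ * r₂ = -(q₁ * r₂ - q₂ * r₁) by ring]
        exact dvd_neg.mpr h1
    have E3 : π ∣ r₂ ∧ π ∣ (-r₁) := by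
      refine SyzAux.engine b hπ (x := r₂) (y := -r₁) ?_
      intro i
      rw [cv, cw]
      fin_cases i
      · show π ∣ r₂ * p₁ + -r₁ * p₂
        rw [show r₂ * p₁ + -r₁ * p₂ = -(r₁ * p₂ - r₂ * p₁) by ring]
        exact dvd_neg.mpr h2
      · show π ∣ r₂ * q₁ + -r₁ * q₂
        rw [show r₂ * q₁ + -r₁ * q₂ = (q₁ * r₂ - q₂ * r₁) by ring]
        exact h1
      · show π ∣ r₂ * r₁ + -r₁ * r₂
        rw [show r₂ * r₁ + -r₁ * r₂ = 0 by ring]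
        exact dvd_zero π
    have E4 : π ∣ (1 : MvPolynomial (Fin 2) K) ∧ π ∣ 0 := by
      refine SyzAux.engine b hπ (x := 1) (y := 0) ?_
      intro i
      rw [cv, cw]
      fin_cases i
      · show π ∣ 1 * p₁ + 0 * p₂
        rw [show (1 : MvPolynomial (Fin 2) K) * p₁ + 0 * p₂ = p₁ by ring]
        exact dvd_neg.mp E1.2
      · show π ∣ 1 * q₁ + 0 * q₂
        rw [show (1 : MvPolynomial (Fin 2) K) * q₁ + 0 * q₂ = q₁ by ring]
        exact dvd_neg.mp E2.2
      · show π ∣ 1 * r₁ + 0 * r₂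
        rw [show (1 : MvPolynomial (Fin 2) K) * r₁ + 0 * r₂ = r₁ by ring]
        exact dvd_neg.mp E3.2
    exact isUnit_of_dvd_one E4.1
  intro d hd1 hd2 hd3
  rcases eq_or_ne d 0 with rfl | hd0
  · rw [zero_dvd_iff] at hd1 hd2 hd3
    exact absurd
      (main (X 0) (X_ne_zero 0) (hd1 ▸ dvd_zero _) (hd2 ▸ dvd_zero _) (hd3 ▸ dvd_zero _))
      SyzAux.not_isUnit_X
  · exact main d hd0 hd1 hd2 hd3

lemma SyzAux.dvd_of_dvd_mul₃ {α : Type*} [CommMonoidWithZero α] [GCDMonoid α]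
    {k a x y z : α} (h1 : k ∣ a * x) (h2 : k ∣ a * y) (h3 : k ∣ a * z)
    (hu : IsUnit (gcd x (gcd y z))) : k ∣ a := by
  have t1 : k ∣ a * gcd y z := (dvd_gcd h2 h3).trans (gcd_mul_left' a y z).dvd
  have t2 : k ∣ a * gcd x (gcd y z) := (dvd_gcd h1 t1).trans (gcd_mul_left' a x (gcd y z)).dvd
  exact t2.trans (associated_mul_unit_left a _ hu).dvd

lemma SyzAux.associated_of_rel {α : Type*} [CommMonoidWithZero α] [GCDMonoid α]
    {P Q R a b c : α} (h1 : b * P = a * Q) (h2 : c * P = a * R)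
    (hcop : IsUnit (gcd P (gcd Q R))) (hcopD : IsUnit (gcd a (gcd b c))) :
    Associated P a := by
  refine associated_of_dvd_dvd ?_ ?_
  · exact SyzAux.dvd_of_dvd_mul₃ (dvd_mul_left P a) (h1 ▸ dvd_mul_left P b)
      (h2 ▸ dvd_mul_left P c) hcop
  · refine SyzAux.dvd_of_dvd_mul₃ (k := a) (a := P) (x := a) (y := b) (z := c)
      (dvd_mul_left a P) ?_ ?_ hcopD
    · rw [mul_comm P b, h1]; exact dvd_mul_right a Q
    · rw [mul_comm P c, h2]; exact dvd_mul_right a R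

lemma SyzAux.gcd_unit {α : Type*} [CommMonoidWithZero α] [GCDMonoid α] {x y z : α}
    (h : ∀ d, d ∣ x → d ∣ y → d ∣ z → IsUnit d) : IsUnit (gcd x (gcd y z)) :=
  h _ (gcd_dvd_left _ _) ((gcd_dvd_right _ _).trans (gcd_dvd_left _ _))
    ((gcd_dvd_right _ _).trans (gcd_dvd_right _ _))

/-- Degree comparison for divisibility of homogeneous polynomials. -/
lemma SyzAux.le_of_dvd_homog {φ ψ : MvPolynomial (Fin 2) K} {m n : ℕ}
    (hφ : φ.IsHomogeneous m) (hψ : ψ.IsHomogeneous n) (h : φ ∣ ψ) (h0 : ψ ≠ 0) : m ≤ n := by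
  classical
  obtain ⟨c, rfl⟩ := h
  obtain ⟨d, hd⟩ := (support_nonempty.mpr h0)
  have hd' := Finset.mem_of_subset (support_mul φ c) hd
  rw [Finset.mem_add] at hd'
  obtain ⟨u, hu, v, hv, rfl⟩ := hd'
  have hn : Finsupp.weight 1 (u + v) = n := hψ (mem_support_iff.mp hd)
  have hm : Finsupp.weight 1 u = m := hφ (mem_support_iff.mp hu)
  rw [map_add, hm] at hn
  omega

end Aux

theorem homogeneous_syzygy_basis_degrees_add_to_n {K : Type*} [Field K]
    (n d₁ d₂ : ℕ) (P Q R p₁ q₁ r₁ p₂ q₂ r₂ : MvPolynomial (Fin 2) K)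
    (hP : P.IsHomogeneous n) (hQ : Q.IsHomogeneous n) (hR : R.IsHomogeneous n)
    (hcop : ∀ d : MvPolynomial (Fin 2) K, d ∣ P → d ∣ Q → d ∣ R → IsUnit d)
    (hp₁ : p₁.IsHomogeneous d₁) (hq₁ : q₁.IsHomogeneous d₁) (hr₁ : r₁.IsHomogeneous d₁)
    (hp₂ : p₂.IsHomogeneous d₂) (hq₂ : q₂.IsHomogeneous d₂) (hr₂ : r₂.IsHomogeneous d₂)
    (h₁ : (![p₁, q₁, r₁] : Fin 3 → MvPolynomial (Fin 2) K) ∈ syzygyModule₂ P Q R)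
    (h₂ : (![p₂, q₂, r₂] : Fin 3 → MvPolynomial (Fin 2) K) ∈ syzygyModule₂ P Q R)
    (b : Module.Basis (Fin 2) (MvPolynomial (Fin 2) K) (syzygyModule₂ P Q R))
    (hb0 : b 0 = ⟨![p₁, q₁, r₁], h₁⟩) (hb1 : b 1 = ⟨![p₂, q₂, r₂], h₂⟩) :
    d₁ + d₂ = n := by
  classical
  letI : GCDMonoid (MvPolynomial (Fin 2) K) :=
    UniqueFactorizationMonoid.toGCDMonoid (MvPolynomial (Fin 2) K)
  -- the syzygy equations
  have e₁ : P * p₁ + Q * q₁ + R * r₁ = 0 := by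
    have := SyzAux.mem_iff.mp h₁; simpa using this
  have e₂ : P * p₂ + Q * q₂ + R * r₂ = 0 := by
    have := SyzAux.mem_iff.mp h₂; simpa using this
  set Dp : MvPolynomial (Fin 2) K := q₁ * r₂ - q₂ * r₁ with hDp_def
  set Dq : MvPolynomial (Fin 2) K := r₁ * p₂ - r₂ * p₁ with hDq_def
  set Dr : MvPolynomial (Fin 2) K := p₁ * q₂ - p₂ * q₁ with hDr_def
  have cross1 : Dq * P = Dp * Q := by
    rw [hDp_def, hDq_def]; linear_combination r₁ * e₂ - r₂ * e₁
  have cross2 : Dr * P = Dp * R := by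
    rw [hDp_def, hDr_def]; linear_combination q₂ * e₁ - q₁ * e₂
  have cross3 : Dr * Q = Dq * R := by
    rw [hDq_def, hDr_def]; linear_combination p₁ * e₂ - p₂ * e₁
  have hminor := SyzAux.minors_unit h₁ h₂ b hb0 hb1
  -- homogeneity of minors
  have hDp : Dp.IsHomogeneous (d₁ + d₂) :=
    (hq₁.mul hr₂).sub (by rw [add_comm]; exact hq₂.mul hr₁)
  have hDq : Dq.IsHomogeneous (d₁ + d₂) :=
    (hr₁.mul hp₂).sub (by rw [add_comm]; exact hr₂.mul hp₁)
  have hDr : Dr.IsHomogeneous (d₁ + d₂) :=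
    (hp₁.mul hq₂).sub (by rw [add_comm]; exact hp₂.mul hq₁)
  -- some of P, Q, R is nonzero
  have hPQR : P ≠ 0 ∨ Q ≠ 0 ∨ R ≠ 0 := by
    by_contra hc
    push_neg at hc
    obtain ⟨hP0, hQ0, hR0⟩ := hc
    exact SyzAux.not_isUnit_X
      (hcop (X 0) (hP0 ▸ dvd_zero _) (hQ0 ▸ dvd_zero _) (hR0 ▸ dvd_zero _))
  have finish : ∀ (S D : MvPolynomial (Fin 2) K), S.IsHomogeneous n →
      D.IsHomogeneous (d₁ + d₂) → S ≠ 0 → Associated S D → d₁ + d₂ = n := by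
    intro S D hS hD hS0 hassoc
    have hD0 : D ≠ 0 := by
      obtain ⟨u, hu⟩ := hassoc
      rw [← hu]
      exact mul_ne_zero hS0 u.ne_zero
    have l1 : n ≤ d₁ + d₂ := SyzAux.le_of_dvd_homog hS hD hassoc.dvd hD0
    have l2 : d₁ + d₂ ≤ n := SyzAux.le_of_dvd_homog hD hS hassoc.symm.dvd hS0
    omega
  rcases hPQR with hP0 | hQ0 | hR0
  · refine finish P Dp hP hDp hP0 ?_
    exact SyzAux.associated_of_rel cross1 cross2
      (SyzAux.gcd_unit hcop)
      (SyzAux.gcd_unit hminor)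
  · refine finish Q Dq hQ hDq hQ0 ?_
    refine SyzAux.associated_of_rel cross1.symm cross3
      (SyzAux.gcd_unit ?_) (SyzAux.gcd_unit ?_)
    · intro d h1 h2 h3; exact hcop d h2 h1 h3
    · intro d h1 h2 h3; exact hminor d h2 h1 h3
  · refine finish R Dr hR hDr hR0 ?_
    refine SyzAux.associated_of_rel cross2.symm cross3.symm
      (SyzAux.gcd_unit ?_) (SyzAux.gcd_unit ?_)
    · intro d h1 h2 h3; exact hcop d h2 h3 h1
    · intro d h1 h2 h3; exact hminor d h2 h3 h1
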